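/- With Ŵ = P⁻¹(K) as above, every L-generated subspace of V containing W contains Ŵ; hence Ŵ is the smallest L-generated subspace containing W (the L-closure of W). -/

import Mathlib

open Submodule Module Set

/-- Every L-generated subspace of V containing W contains Ŵ = P⁻¹(K), where K is the
identity component of the closure of P(L) in V/W; hence Ŵ is the L-closure of W. -/
theorem stmt_13 {V : Type*} [NormedAddCommGroup V] [NormedSpace ℝ V]
    [FiniteDimensional ℝ V] (L : AddSubgroup V)
    (hL : ∃ b : Basis (Fin (Module.finrank ℝ V)) ℝ V,
      AddSubgroup.closure (Set.range ⇑b) = L)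
    (W : Submodule ℝ V) :
    ∀ U : Submodule ℝ V,
      Submodule.span ℝ ((U : Set V) ∩ (L : Set V)) = U → W ≤ U →
      ⇑W.mkQ ⁻¹' (connectedComponentIn (closure (⇑W.mkQ '' (L : Set V))) 0)
        ⊆ (U : Set V) := by
  classical
  obtain ⟨b, hb⟩ := hL
  intro U hU hWU
  haveI : IsClosed (U : Set V) := U.closed_of_finiteDimensional
  haveI : IsClosed (W : Set V) := W.closed_of_finiteDimensional
  set Λ : Submodule ℤ V := span ℤ (Set.range ⇑b) with hΛdef
  have hLΛ : (L : Set V) = (Λ : Set V) := by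
    rw [← hb, ← Submodule.span_int_eq_addSubgroupClosure]; rfl
  set q : V →ₗ[ℤ] (V ⧸ U) := U.mkQ.restrictScalars ℤ with hqdef
  set QΛ : Submodule ℤ (V ⧸ U) := Λ.map q with hQΛdef
  -- Λ spans V over ℝ
  have hspanΛ : span ℝ (Λ : Set V) = ⊤ := by
    rw [eq_top_iff, ← b.span_eq]
    exact span_mono (fun x hx => Submodule.subset_span hx)
  -- QΛ spans V ⧸ U over ℝ
  have hQΛset : (QΛ : Set (V ⧸ U)) = ⇑U.mkQ '' (Λ : Set V) := by
    rw [hQΛdef, Submodule.map_coe]; rfl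
  have hspanQΛ : span ℝ (QΛ : Set (V ⧸ U)) = ⊤ := by
    rw [hQΛset, ← Submodule.map_span, hspanΛ, Submodule.map_top, Submodule.range_mkQ]
  -- finrank computations
  haveI : Module.Finite ℤ Λ := Module.Finite.span_of_finite ℤ (Set.finite_range ⇑b)
  have hΛrank : finrank ℤ Λ = finrank ℝ V := by
    rw [finrank_eq_card_basis (b.restrictScalars ℤ), Fintype.card_fin]
  set f : Λ →ₗ[ℤ] V ⧸ U := q.comp Λ.subtype with hfdef
  have hrange : LinearMap.range f = QΛ := by
    rw [hfdef, LinearMap.range_comp, Submodule.range_subtype]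
  have hker_mem : ∀ x : Λ, x ∈ LinearMap.ker f ↔ (x : V) ∈ U := by
    intro x
    simp only [hfdef, LinearMap.mem_ker, LinearMap.comp_apply, Submodule.coe_subtype,
      hqdef, LinearMap.restrictScalars_apply, Submodule.mkQ_apply,
      Submodule.Quotient.mk_eq_zero]
  -- N_U : the lattice Λ ∩ U inside U
  set N_U : Submodule ℤ U := ZLattice.comap ℝ Λ U.subtype with hNdef
  have hN_mem : ∀ y : U, y ∈ N_U ↔ (y : V) ∈ Λ := fun _ => Iff.rfl
  haveI : DiscreteTopology Λ := inferInstance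
  haveI : DiscreteTopology N_U :=
    ZLattice.comap_discreteTopology ℝ Λ continuous_subtype_val Subtype.coe_injective
  haveI : IsZLattice ℝ N_U := by
    constructor
    apply Submodule.map_injective_of_injective U.injective_subtype
    rw [Submodule.map_span, Submodule.map_top, Submodule.range_subtype]
    have himg : ⇑U.subtype '' (N_U : Set U) = (U : Set V) ∩ (L : Set V) := by
      rw [hLΛ]
      ext v
      constructor
      · rintro ⟨y, hy, rfl⟩; exact ⟨y.2, hy⟩
      · rintro ⟨hvU, hvΛ⟩; exact ⟨⟨v, hvU⟩, hvΛ, rfl⟩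
    rw [himg, hU]
  have hNrank : finrank ℤ N_U = finrank ℝ U := ZLattice.rank ℝ N_U
  -- ker f ≃ N_U
  have hkerrank : finrank ℤ (LinearMap.ker f) = finrank ℝ U := by
    rw [← hNrank]
    refine LinearEquiv.finrank_eq ?_
    exact
      { toFun := fun x => ⟨⟨(x : Λ), (hker_mem x.1).1 x.2⟩, (x : Λ).2⟩
        invFun := fun y => ⟨⟨(y : U), (hN_mem y.1).1 y.2⟩, (hker_mem _).2 (y : U).2⟩
        map_add' := fun _ _ => rfl
        map_smul' := fun _ _ => rfl
        left_inv := fun _ => rfl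
        right_inv := fun _ => rfl }
  have hQΛrank : finrank ℤ QΛ = finrank ℝ (V ⧸ U) := by
    have h1 : finrank ℤ (Λ ⧸ LinearMap.ker f) + finrank ℤ (LinearMap.ker f) = finrank ℤ Λ :=
      Submodule.finrank_quotient_add_finrank _
    have h2 : finrank ℤ QΛ = finrank ℤ (Λ ⧸ LinearMap.ker f) := by
      rw [← hrange]; exact (LinearEquiv.finrank_eq f.quotKerEquivRange).symm
    have h3 : finrank ℝ (V ⧸ U) + finrank ℝ U = finrank ℝ V :=
      Submodule.finrank_quotient_add_finrank U
    omega
  -- a ℤ-basis of QΛ gives an ℝ-basis of V ⧸ U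
  haveI : Module.Finite ℤ QΛ := Module.Finite.map Λ q
  haveI : NoZeroSMulDivisors ℤ (V ⧸ U) := by
    refine ⟨fun {n x} h => ?_⟩
    rw [← Int.cast_smul_eq_zsmul ℝ] at h
    rcases smul_eq_zero.mp h with h | h
    · exact Or.inl (by exact_mod_cast h)
    · exact Or.inr h
  haveI : Module.IsTorsionFree ℤ QΛ := inferInstance
  haveI : Module.Free ℤ QΛ := Module.free_of_finite_type_torsion_free'
  set cb := Module.Free.chooseBasis ℤ QΛ with hcbdef
  set c : Module.Free.ChooseBasisIndex ℤ QΛ → (V ⧸ U) := fun i => (cb i : V ⧸ U) with hcdef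
  have hc : span ℤ (Set.range c) = QΛ := by
    have := congrArg (Submodule.map QΛ.subtype) cb.span_eq
    rwa [Submodule.map_span, Submodule.map_top, Submodule.range_subtype, ← Set.range_comp]
      at this
  have htop : ⊤ ≤ span ℝ (Set.range c) := by
    rw [← hspanQΛ]
    refine span_le.2 (fun x hx => ?_)
    rw [SetLike.mem_coe, ← hc] at hx
    exact Submodule.span_subset_span ℤ ℝ _ hx
  have hcard : Fintype.card (Module.Free.ChooseBasisIndex ℤ QΛ) = finrank ℝ (V ⧸ U) := by
    rw [← Module.finrank_eq_card_chooseBasisIndex, hQΛrank]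
  set β := basisOfTopLeSpanOfCardEqFinrank c htop hcard with hβdef
  have hβ : ⇑β = c := coe_basisOfTopLeSpanOfCardEqFinrank c htop hcard
  have hQc : QΛ = span ℤ (Set.range ⇑β) := by rw [hβ, hc]
  -- QΛ is discrete and closed
  haveI hdisc : DiscreteTopology QΛ := by rw [hQc]; infer_instance
  haveI hdisc' : DiscreteTopology QΛ.toAddSubgroup := hdisc
  have hclosed : IsClosed (QΛ : Set (V ⧸ U)) :=
    AddSubgroup.isClosed_of_discrete (H := QΛ.toAddSubgroup)
  -- the identity component of closure (U.mkQ '' L) is {0}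
  have himgL : ⇑U.mkQ '' (L : Set V) = (QΛ : Set (V ⧸ U)) := by rw [hQΛset, hLΛ]
  have hcompU : connectedComponentIn (closure (⇑U.mkQ '' (L : Set V))) 0 ⊆ {0} := by
    rw [himgL, hclosed.closure_eq]
    have h0 : (0 : V ⧸ U) ∈ (QΛ : Set (V ⧸ U)) := QΛ.zero_mem
    rw [connectedComponentIn_eq_image h0]
    haveI : TotallyDisconnectedSpace QΛ := inferInstance
    rw [totallyDisconnectedSpace_iff_connectedComponent_singleton.mp inferInstance
      (⟨0, h0⟩ : (QΛ : Set (V ⧸ U)))]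
    intro y hy
    obtain ⟨z, hz, rfl⟩ := hy
    simp only [Set.mem_singleton_iff] at hz
    simp [hz]
  -- transfer along the projection π : V ⧸ W → V ⧸ U
  intro x hx
  set π : (V ⧸ W) →ₗ[ℝ] (V ⧸ U) :=
    W.liftQ U.mkQ (by rw [Submodule.ker_mkQ]; exact hWU) with hπdef
  have hπmk : ∀ v : V, π (W.mkQ v) = U.mkQ v := fun v => rfl
  have hπcont : Continuous π := π.continuous_of_finiteDimensional
  have h0cl : (0 : V ⧸ W) ∈ closure (⇑W.mkQ '' (L : Set V)) :=
    subset_closure ⟨0, L.zero_mem, map_zero _⟩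
  have key : π (W.mkQ x) ∈ connectedComponentIn (closure (⇑U.mkQ '' (L : Set V))) 0 := by
    have h1 := hπcont.image_connectedComponentIn_subset h0cl (Set.mem_image_of_mem π hx)
    have h2 : π '' closure (⇑W.mkQ '' (L : Set V)) ⊆ closure (⇑U.mkQ '' (L : Set V)) := by
      refine (image_closure_subset_closure_image hπcont).trans (closure_mono ?_)
      rw [← Set.image_comp]
      exact Set.image_subset_iff.2 (fun v hv => ⟨v, hv, rfl⟩)
    have h3 := connectedComponentIn_mono (π 0) h2
    have h0 : π (0 : V ⧸ W) = 0 := map_zero π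
    have h4 := h3 h1
    rwa [h0] at h4
  have : U.mkQ x = 0 := by
    have := hcompU ((hπmk x) ▸ key)
    simpa using this
  rwa [Submodule.mkQ_apply, Submodule.Quotient.mk_eq_zero] at this
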